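/- For a closed arc configuration with two curvature values κ₊ ≠ κ₋, both nonzero, total phase lengths L₊, L₋ > 0, equal splitting into M pieces per phase, and turning constraint κ₊L₊ + κ₋L₋ = 2πm: if M ≥ 2 and 2πm/M ∉ 2πℤ, the equal-split configuration satisfies both the turning constraint ∑ᵢ Δθᵢ = 2πm and the closure constraint ∑ᵢ vᵢ = 0. -/

import Mathlib

open Complex Finset

lemma pair_sum {α : Type*} [AddCommMonoid α] (f : ℕ → α) (n : ℕ) :
    ∑ i ∈ range (2*n), f i = ∑ k ∈ range n, (f (2*k) + f (2*k+1)) := by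
  induction n with
  | zero => simp
  | succ n ih =>
      have h : 2*(n+1) = (2*n + 1) + 1 := by ring
      rw [h, Finset.sum_range_succ, Finset.sum_range_succ, ih, Finset.sum_range_succ]
      abel

/-- The equal-split alternating-arc configuration with two nonzero curvature
values `κ₊ ≠ κ₋`, phase lengths `L₊, L₋ > 0`, `M ≥ 2` pieces per phase, and
turning constraint `κ₊L₊ + κ₋L₋ = 2πm` (with `2πm/M ∉ 2πℤ`) satisfies both the
turning constraint `∑ᵢ Δθᵢ = 2πm` and the closure constraint `∑ᵢ vᵢ = 0`. -/
theorem stmt6 (M : ℕ) (hM : 2 ≤ M) (m : ℤ) (κp κm Lp Lm : ℝ)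
    (hκp : κp ≠ 0) (hκm : κm ≠ 0) (hLp : 0 < Lp) (hLm : 0 < Lm)
    (hκdist : κp ≠ κm)
    (hturn : κp * Lp + κm * Lm = 2*Real.pi*(m : ℝ))
    (hnd : ¬ ∃ k : ℤ, 2*Real.pi*(m : ℝ)/(M : ℝ) = 2*Real.pi*(k : ℝ)) :
    let Δθ : ℕ → ℝ := fun i => if i % 2 = 0 then κp * Lp / (M : ℝ) else κm * Lm / (M : ℝ)
    let S : ℕ → ℝ := fun i => ∑ j ∈ range i, Δθ j
    let κ : ℕ → ℝ := fun i => if i % 2 = 0 then κp else κm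
    let v : ℕ → ℂ := fun i =>
      (Complex.exp (I * ((S (i+1) : ℝ) : ℂ)) - Complex.exp (I * ((S i : ℝ) : ℂ))) / (I * ((κ i : ℝ) : ℂ))
    (∑ i ∈ range (2*M), Δθ i = 2*Real.pi*(m : ℝ)) ∧
    (∑ i ∈ range (2*M), v i = 0) := by
  intro Δθ S κ v
  have hM0 : (M:ℝ) ≠ 0 := by positivity
  set a : ℝ := κp * Lp / (M : ℝ) with ha
  set b : ℝ := κm * Lm / (M : ℝ) with hb
  have hΔe : ∀ k, Δθ (2*k) = a := by
    intro k; simp [Δθ, Nat.mul_mod_right, ha]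
  have hΔo : ∀ k, Δθ (2*k+1) = b := by
    intro k; simp [Δθ, Nat.mul_add_mod, hb]
  have hMab : (M:ℝ) * (a + b) = 2*Real.pi*(m:ℝ) := by
    rw [ha, hb]; field_simp; linarith [hturn]
  -- turning constraint
  have hturnsum : ∑ i ∈ range (2*M), Δθ i = 2*Real.pi*(m : ℝ) := by
    rw [pair_sum]
    have : ∀ k ∈ range M, Δθ (2*k) + Δθ (2*k+1) = a + b := by
      intro k _; rw [hΔe, hΔo]
    rw [Finset.sum_congr rfl this, Finset.sum_const, card_range, nsmul_eq_mul, hMab]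
  refine ⟨hturnsum, ?_⟩
  -- partial sums
  have hS : ∀ k, S (2*k) = k*(a+b) ∧ S (2*k+1) = k*(a+b) + a := by
    intro k
    induction k with
    | zero =>
        constructor
        · simp [S]
        · simp only [Nat.cast_zero, zero_mul, zero_add]
          show S 1 = a
          simp [S, Finset.sum_range_one, Δθ, ha]
    | succ k ih =>
        have h1 : S (2*(k+1)) = S (2*k+1) + Δθ (2*k+1) := by
          have : 2*(k+1) = (2*k+1)+1 := by ring
          rw [this]; exact Finset.sum_range_succ _ _
        have h2 : S (2*(k+1)+1) = S (2*(k+1)) + Δθ (2*(k+1)) := Finset.sum_range_succ _ _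
        constructor
        · rw [h1, ih.2, hΔo]; push_cast; ring
        · rw [h2, h1, ih.2, hΔo, hΔe]; push_cast; ring
  set w : ℂ := Complex.exp (I * ((a:ℂ) + (b:ℂ))) with hw
  set D : ℂ := (Complex.exp (I * (a:ℂ)) - 1) / (I * (κp:ℝ))
      + Complex.exp (I * (a:ℂ)) * (Complex.exp (I * (b:ℂ)) - 1) / (I * (κm:ℝ)) with hD
  have hexp : ∀ k : ℕ, Complex.exp (I * (((k:ℝ)*(a+b) : ℝ) : ℂ)) = w ^ k := by
    intro k
    rw [hw, ← Complex.exp_nat_mul]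
    congr 1
    push_cast
    ring
  have hpair : ∀ k ∈ range M, v (2*k) + v (2*k+1) = w^k * D := by
    intro k _
    have e0 : S (2*k) = (k:ℝ)*(a+b) := (hS k).1
    have e1 : S (2*k+1) = (k:ℝ)*(a+b) + a := (hS k).2
    have e2 : S (2*k+2) = ((k:ℝ)+1)*(a+b) := by
      have := (hS (k+1)).1
      have h : 2*(k+1) = 2*k+2 := by ring
      rw [h] at this; rw [this]; push_cast; ring
    have hκe : κ (2*k) = κp := by simp [κ, Nat.mul_mod_right]
    have hκo : κ (2*k+1) = κm := by simp [κ, Nat.mul_add_mod]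
    show (Complex.exp (I * ((S (2*k+1) : ℝ) : ℂ)) - Complex.exp (I * ((S (2*k) : ℝ) : ℂ))) / (I * ((κ (2*k) : ℝ) : ℂ))
      + (Complex.exp (I * ((S (2*k+1+1) : ℝ) : ℂ)) - Complex.exp (I * ((S (2*k+1) : ℝ) : ℂ))) / (I * ((κ (2*k+1) : ℝ) : ℂ))
      = w^k * D
    rw [hκe, hκo, e0, e1]
    have e2' : S (2*k+1+1) = ((k:ℝ)+1)*(a+b) := e2
    rw [e2']
    have exp0 : Complex.exp (I * (((k:ℝ)*(a+b) : ℝ) : ℂ)) = w^k := hexp k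
    have exp1 : Complex.exp (I * ((((k:ℝ)*(a+b) + a) : ℝ) : ℂ))
        = w^k * Complex.exp (I * (a:ℂ)) := by
      rw [← exp0, ← Complex.exp_add]; congr 1; push_cast; ring
    have exp2 : Complex.exp (I * (((((k:ℝ)+1)*(a+b)) : ℝ) : ℂ))
        = w^k * Complex.exp (I * (a:ℂ)) * Complex.exp (I * (b:ℂ)) := by
      rw [← exp0, ← Complex.exp_add, ← Complex.exp_add]; congr 1; push_cast; ring
    rw [exp0, exp1, exp2, hD]
    have hIκp : (I * (κp:ℂ)) ≠ 0 := by
      simp [Complex.I_ne_zero, Complex.ofReal_ne_zero, hκp]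
    have hIκm : (I * (κm:ℂ)) ≠ 0 := by
      simp [Complex.I_ne_zero, Complex.ofReal_ne_zero, hκm]
    field_simp
  have hwM : w ^ M = 1 := by
    rw [← hexp M]
    have : (M:ℝ)*(a+b) = 2*Real.pi*(m:ℝ) := hMab
    rw [this]
    have := Complex.exp_int_mul_two_pi_mul_I m
    rw [← this]
    congr 1
    push_cast
    ring
  have hw1 : w ≠ 1 := by
    intro h
    rw [hw, Complex.exp_eq_one_iff] at h
    obtain ⟨n, hn⟩ := h
    apply hnd
    refine ⟨n, ?_⟩
    have hab : ((a:ℂ) + (b:ℂ)) = (n:ℂ) * (2*Real.pi) := by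
      have hI : (I : ℂ) ≠ 0 := Complex.I_ne_zero
      have : I * ((a:ℂ)+(b:ℂ)) = I * ((n:ℂ) * (2*Real.pi)) := by
        rw [hn]; ring
      exact mul_left_cancel₀ hI this
    have hab' : a + b = (n:ℝ) * (2*Real.pi) := by
      exact_mod_cast hab
    have : 2*Real.pi*(m:ℝ)/(M:ℝ) = a + b := by
      field_simp
      linarith [hMab]
    rw [this, hab']; ring
  have hgeom : ∑ k ∈ range M, w ^ k = 0 := by
    rw [geom_sum_eq hw1, hwM]; norm_num
  calc ∑ i ∈ range (2*M), v i = ∑ k ∈ range M, (v (2*k) + v (2*k+1)) := pair_sum v M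
    _ = ∑ k ∈ range M, w^k * D := Finset.sum_congr rfl hpair
    _ = (∑ k ∈ range M, w^k) * D := by rw [Finset.sum_mul]
    _ = 0 := by rw [hgeom, zero_mul]
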